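/- arXiv:2110.02505 — 2 statements merged into one kernel-verified Lean document; each statement's English description precedes it below -/
import Mathlib

section
/- For a bounded linear operator A on a complex Hilbert space, w(A)² ≤ (1/4)‖A*A + AA*‖ + (1/2)w(A²). -/
open ContinuousLinearMap in
noncomputable def numRad {E : Type*} [NormedAddCommGroup E] [InnerProductSpace ℂ E]
    (T : E →L[ℂ] E) : ℝ :=
  ⨆ x : {x : E // ‖x‖ = 1}, ‖(inner ℂ (T x) (x : E) : ℂ)‖

variable {H : Type*} [NormedAddCommGroup H] [InnerProductSpace ℂ H] [CompleteSpace H]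

/-- `|A| = (A*A)^{1/2}`, the positive square root of `A*A`. -/
noncomputable def absOp (A : H →L[ℂ] H) : H →L[ℂ] H :=
  CFC.sqrt (ContinuousLinearMap.adjoint A * A)

/-- real part of an operator -/
noncomputable def reOp (A : H →L[ℂ] H) : H →L[ℂ] H :=
  (1 / 2 : ℂ) • (A + ContinuousLinearMap.adjoint A)

/-- imaginary part of an operator -/
noncomputable def imOp (A : H →L[ℂ] H) : H →L[ℂ] H :=
  (1 / (2 * Complex.I) : ℂ) • (A - ContinuousLinearMap.adjoint A)

/-- the block diagonal operator `diag(A,B)` on `H ⊕ H` (ℓ²-sum). -/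
noncomputable def blockDiag (A B : H →L[ℂ] H) :
    WithLp 2 (H × H) →L[ℂ] WithLp 2 (H × H) :=
  ((WithLp.prodContinuousLinearEquiv 2 ℂ H H).symm.toContinuousLinearMap).comp
    ((A.prodMap B).comp (WithLp.prodContinuousLinearEquiv 2 ℂ H H).toContinuousLinearMap)

/-- the off-diagonal block operator `[[O,A],[B,O]] : (x,y) ↦ (A y, B x)` on `H ⊕ H`. -/
noncomputable def blockOffDiag (A B : H →L[ℂ] H) :
    WithLp 2 (H × H) →L[ℂ] WithLp 2 (H × H) :=
  ((WithLp.prodContinuousLinearEquiv 2 ℂ H H).symm.toContinuousLinearMap).comp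
    (((A.prodMap B).comp (ContinuousLinearEquiv.prodComm ℂ H H).toContinuousLinearMap).comp
      (WithLp.prodContinuousLinearEquiv 2 ℂ H H).toContinuousLinearMap)


open ContinuousLinearMap in
lemma numRad_nonneg' (T : H →L[ℂ] H) : 0 ≤ numRad T :=
  Real.iSup_nonneg fun _ => norm_nonneg _

open ContinuousLinearMap in
lemma inner_le_numRad' (T : H →L[ℂ] H) (x : H) (hx : ‖x‖ = 1) :
    ‖(inner ℂ (T x) x : ℂ)‖ ≤ numRad T := by
  refine le_ciSup_of_le ⟨‖T‖, ?_⟩ (⟨x, hx⟩ : {x : H // ‖x‖ = 1}) le_rfl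
  rintro r ⟨y, rfl⟩
  calc ‖(inner ℂ (T y) (y : H) : ℂ)‖ ≤ ‖T (y : H)‖ * ‖(y : H)‖ := norm_inner_le_norm _ _
    _ ≤ ‖T‖ * ‖(y : H)‖ * ‖(y : H)‖ := by gcongr; exact T.le_opNorm _
    _ = ‖T‖ := by rw [y.2]; ring

open ContinuousLinearMap in
lemma key_pointwise (A : H →L[ℂ] H) (x : H) (hx : ‖x‖ = 1) :
    ‖(inner ℂ (A x) x : ℂ)‖ ^ 2
      ≤ (1 / 4) * ‖adjoint A * A + A * adjoint A‖
        + (1 / 2) * ‖(inner ℂ ((A * A) x) x : ℂ)‖ := by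
  set z : ℂ := inner ℂ (A x) x with hz
  set u : ℂ := inner ℂ ((A * A) x) x with hu
  obtain ⟨c, hc1, hcz⟩ : ∃ c : ℂ, ‖c‖ = 1 ∧ (starRingEnd ℂ) c * z = (‖z‖ : ℂ) := by
    rcases eq_or_ne z 0 with h | h
    · exact ⟨1, by simp [h]⟩
    · refine ⟨z / ‖z‖, ?_, ?_⟩
      · simp [norm_div, h]
      · have h0 : ((‖z‖ : ℝ) : ℂ) ≠ 0 := by simpa using h
        rw [map_div₀, Complex.conj_ofReal, div_mul_eq_mul_div, mul_comm, Complex.mul_conj',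
          div_eq_iff h0]
        push_cast
        ring
  set v : H := c • A x + (starRingEnd ℂ) c • (adjoint A) x with hv
  have hvx : (inner ℂ v x : ℂ) = 2 * ‖z‖ := by
    have h1 : (inner ℂ ((adjoint A) x) x : ℂ) = (starRingEnd ℂ) z := by
      rw [adjoint_inner_left, ← inner_conj_symm, ← hz]
    simp only [hv, inner_add_left, inner_smul_left, h1, RingHom.id_apply,
      starRingEnd_self_apply, hcz]
    have : c * (starRingEnd ℂ) z = (starRingEnd ℂ) ((starRingEnd ℂ) c * z) := by
      rw [map_mul, starRingEnd_self_apply]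
    rw [this, hcz, Complex.conj_ofReal]
    ring
  have h2 : 2 * ‖z‖ ≤ ‖v‖ := by
    have : (2 : ℝ) * ‖z‖ = ‖(inner ℂ v x : ℂ)‖ := by
      rw [hvx]
      simp [norm_mul, abs_of_nonneg (norm_nonneg z)]
    rw [this]
    calc ‖(inner ℂ v x : ℂ)‖ ≤ ‖v‖ * ‖x‖ := norm_inner_le_norm _ _
      _ = ‖v‖ := by rw [hx, mul_one]
  have hiAA : (inner ℂ (A x) ((adjoint A) x) : ℂ) = u := by
    rw [adjoint_inner_right, hu, ContinuousLinearMap.mul_apply]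
  have h3 : ‖v‖ ^ 2 ≤ ‖A x‖ ^ 2 + ‖(adjoint A) x‖ ^ 2 + 2 * ‖u‖ := by
    have e : ‖v‖ ^ 2 = ‖c • A x‖ ^ 2 + 2 * Complex.re (inner ℂ (c • A x) ((starRingEnd ℂ) c • (adjoint A) x)) + ‖(starRingEnd ℂ) c • (adjoint A) x‖ ^ 2 :=
      @norm_add_sq ℂ _ _ _ _ _ _
    have einner : (inner ℂ (c • A x) ((starRingEnd ℂ) c • (adjoint A) x) : ℂ)
        = (starRingEnd ℂ) c * ((starRingEnd ℂ) c * u) := by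
      rw [inner_smul_left, inner_smul_right, hiAA]
    have hre : Complex.re (inner ℂ (c • A x) ((starRingEnd ℂ) c • (adjoint A) x)) ≤ ‖u‖ := by
      rw [einner]
      calc Complex.re ((starRingEnd ℂ) c * ((starRingEnd ℂ) c * u))
          ≤ ‖(starRingEnd ℂ) c * ((starRingEnd ℂ) c * u)‖ := Complex.re_le_norm _
        _ = ‖u‖ := by simp [norm_mul, hc1]
    have hnc : ∀ y : H, ‖c • y‖ = ‖y‖ := fun y => by
      rw [norm_smul, hc1, one_mul]
    have hnc' : ∀ y : H, ‖(starRingEnd ℂ) c • y‖ = ‖y‖ := fun y => by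
      rw [norm_smul, RCLike.norm_conj, hc1, one_mul]
    rw [e, hnc, hnc']
    linarith
  have h4 : ‖A x‖ ^ 2 + ‖(adjoint A) x‖ ^ 2 ≤ ‖adjoint A * A + A * adjoint A‖ := by
    have e1 : (inner ℂ ((adjoint A * A + A * adjoint A) x) x : ℂ)
        = ((‖A x‖ ^ 2 + ‖(adjoint A) x‖ ^ 2 : ℝ) : ℂ) := by
      have eA : (inner ℂ (A ((adjoint A) x)) x : ℂ) = ((‖(adjoint A) x‖ : ℂ)) ^ 2 :=
        calc (inner ℂ (A ((adjoint A) x)) x : ℂ)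
            = inner ℂ ((adjoint (adjoint A)) ((adjoint A) x)) x := by rw [adjoint_adjoint]
          _ = inner ℂ ((adjoint A) x) ((adjoint A) x) := adjoint_inner_left _ _ _
          _ = _ := inner_self_eq_norm_sq_to_K _
      simp only [ContinuousLinearMap.add_apply, inner_add_left,
        ContinuousLinearMap.mul_apply, adjoint_inner_left, eA,
        inner_self_eq_norm_sq_to_K]
      norm_cast
      rw [Complex.ofReal_add]
      rfl
    calc ‖A x‖ ^ 2 + ‖(adjoint A) x‖ ^ 2
        = ‖(inner ℂ ((adjoint A * A + A * adjoint A) x) x : ℂ)‖ := by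
          rw [e1, Complex.norm_real, Real.norm_eq_abs, abs_of_nonneg (by positivity)]
      _ ≤ ‖(adjoint A * A + A * adjoint A) x‖ * ‖x‖ := norm_inner_le_norm _ _
      _ ≤ ‖adjoint A * A + A * adjoint A‖ * ‖x‖ * ‖x‖ := by
          gcongr; exact ContinuousLinearMap.le_opNorm _ _
      _ = ‖adjoint A * A + A * adjoint A‖ := by rw [hx]; ring
  have h5 : (2 * ‖z‖) ^ 2 ≤ ‖v‖ ^ 2 := by
    apply pow_le_pow_left₀ (by positivity) h2
  nlinarith [norm_nonneg z, norm_nonneg u]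

theorem abuOmar_kittaneh_ineq (A : H →L[ℂ] H) :
    numRad A ^ 2
      ≤ (1 / 4) * ‖ContinuousLinearMap.adjoint A * A + A * ContinuousLinearMap.adjoint A‖
        + (1 / 2) * numRad (A * A) := by
  classical
  have hR0 : 0 ≤ (1 / 4) * ‖ContinuousLinearMap.adjoint A * A + A * ContinuousLinearMap.adjoint A‖
      + (1 / 2) * numRad (A * A) := by
    have := numRad_nonneg' (A * A)
    positivity
  set R := (1 / 4) * ‖ContinuousLinearMap.adjoint A * A + A * ContinuousLinearMap.adjoint A‖
      + (1 / 2) * numRad (A * A) with hR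
  have hle : numRad A ≤ Real.sqrt R := by
    apply Real.iSup_le _ (Real.sqrt_nonneg _)
    rintro ⟨x, hx⟩
    have h := key_pointwise A x hx
    have h2 : ‖(inner ℂ (A x) x : ℂ)‖ ^ 2 ≤ R := by
      refine h.trans ?_
      rw [hR]
      have := inner_le_numRad' (A * A) x hx
      linarith
    calc ‖(inner ℂ (A x) x : ℂ)‖ = Real.sqrt (‖(inner ℂ (A x) x : ℂ)‖ ^ 2) := by
          rw [Real.sqrt_sq (norm_nonneg _)]
      _ ≤ Real.sqrt R := Real.sqrt_le_sqrt h2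
  calc numRad A ^ 2 ≤ Real.sqrt R ^ 2 := pow_le_pow_left₀ (numRad_nonneg' A) hle 2
    _ = R := Real.sq_sqrt hR0
end

section
/- For A, B ∈ B(H), if the off-diagonal block operator T = [[O, A],[B, O]] satisfies w(T) = (1/2)‖Re(A) + i·Im(B)‖, then ‖A+B*‖ = ‖A−B*‖ = ‖Re(A) + i·Im(B)‖. -/
variable {H : Type*} [NormedAddCommGroup H] [InnerProductSpace ℂ H] [CompleteSpace H]

open ContinuousLinearMap

lemma numRad_nonneg {E : Type*} [NormedAddCommGroup E] [InnerProductSpace ℂ E]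
    (T : E →L[ℂ] E) : 0 ≤ numRad T :=
  Real.iSup_nonneg fun _ => norm_nonneg _

lemma le_numRad {E : Type*} [NormedAddCommGroup E] [InnerProductSpace ℂ E]
    (T : E →L[ℂ] E) {z : E} (hz : ‖z‖ = 1) : ‖(inner ℂ (T z) z : ℂ)‖ ≤ numRad T := by
  have hb : BddAbove (Set.range fun x : {x : E // ‖x‖ = 1} => ‖(inner ℂ (T x) (x : E) : ℂ)‖) := by
    refine ⟨‖T‖, ?_⟩
    rintro r ⟨⟨x, hx⟩, rfl⟩
    calc ‖(inner ℂ (T x) x : ℂ)‖ ≤ ‖T x‖ * ‖x‖ := norm_inner_le_norm _ _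
      _ ≤ ‖T‖ * ‖x‖ * ‖x‖ := by gcongr; exact T.le_opNorm x
      _ = ‖T‖ := by rw [hx]; ring
  exact le_ciSup hb (⟨z, hz⟩ : {x : E // ‖x‖ = 1})

lemma key_ineq (A B : H →L[ℂ] H) (u v : H) (hu : ‖u‖ = 1) (hv : ‖v‖ = 1)
    (c : ℂ) (hc : ‖c‖ = 1) :
    ‖(starRingEnd ℂ c) * inner ℂ (A v) u + c * inner ℂ (B u) v‖
      ≤ 2 * numRad (blockOffDiag A B) := by
  set w : WithLp 2 (H × H) := (WithLp.prodContinuousLinearEquiv 2 ℂ H H).symm (u, c • v) with hw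
  have hnw : ‖w‖ = Real.sqrt 2 := by
    have h2 : ‖w‖ ^ 2 = 2 := by
      rw [WithLp.prod_norm_sq_eq_of_L2]
      simp [hw, norm_smul, hu, hv, hc]; norm_num
    nlinarith [Real.sq_sqrt (by norm_num : (2:ℝ) ≥ 0), Real.sqrt_nonneg 2, norm_nonneg w]
  set s : ℝ := (Real.sqrt 2)⁻¹ with hs
  have hs0 : 0 ≤ s := by positivity
  set z : WithLp 2 (H × H) := ((s : ℂ)) • w with hz
  have hnz : ‖z‖ = 1 := by
    rw [hz, norm_smul, hnw]
    simp only [Complex.norm_real, Real.norm_eq_abs, abs_of_nonneg hs0, hs]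
    rw [abs_of_nonneg (by positivity), inv_mul_cancel₀ (by positivity)]
  have hss : (starRingEnd ℂ) (s : ℂ) * (s : ℂ) = (1/2 : ℂ) := by
    rw [Complex.conj_ofReal, ← Complex.ofReal_mul, hs,
      ← mul_inv, Real.mul_self_sqrt (by norm_num : (0:ℝ) ≤ 2)]
    norm_num
  have hinner : (inner ℂ (blockOffDiag A B z) z : ℂ)
      = (1/2 : ℂ) * ((starRingEnd ℂ c) * inner ℂ (A v) u + c * inner ℂ (B u) v) := by
    rw [hz, map_smul, inner_smul_left, inner_smul_right, ← mul_assoc, hss, hw]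
    congr 1
    simp [blockOffDiag, WithLp.prod_inner_apply, inner_smul_left, inner_smul_right]
  have hle := le_numRad (blockOffDiag A B) hnz
  rw [hinner, norm_mul] at hle
  norm_num at hle
  linarith

lemma conj_exp_real_mul_I (x : ℝ) :
    (starRingEnd ℂ) (Complex.exp (x * Complex.I)) = Complex.exp (-(x * Complex.I)) := by
  rw [← Complex.exp_conj]
  congr 1
  simp [Complex.conj_ofReal]

lemma align (α β : ℂ) : ∃ c : ℂ, ‖c‖ = 1 ∧
    ‖(starRingEnd ℂ c) * α + c * β‖ = ‖α‖ + ‖β‖ := by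
  refine ⟨Complex.exp ((((α.arg - β.arg)/2 : ℝ)) * Complex.I), ?_, ?_⟩
  · exact Complex.norm_exp_ofReal_mul_I _
  · set aa := α.arg with haa
    set bb := β.arg with hbb
    have hα : α = (‖α‖ : ℂ) * Complex.exp ((aa : ℝ) * Complex.I) := by
      rw [haa]
      exact (Complex.norm_mul_exp_arg_mul_I α).symm
    have hβ : β = (‖β‖ : ℂ) * Complex.exp ((bb : ℝ) * Complex.I) := by
      rw [hbb]
      exact (Complex.norm_mul_exp_arg_mul_I β).symm
    rw [conj_exp_real_mul_I]
    nth_rewrite 1 [hα]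
    nth_rewrite 1 [hβ]
    have e1 : Complex.exp (-((((aa - bb)/2 : ℝ)) * Complex.I)) *
        Complex.exp ((aa : ℝ) * Complex.I)
        = Complex.exp ((((aa + bb)/2 : ℝ)) * Complex.I) := by
      rw [← Complex.exp_add]; congr 1; push_cast; ring
    have e2 : Complex.exp ((((aa - bb)/2 : ℝ)) * Complex.I) *
        Complex.exp ((bb : ℝ) * Complex.I)
        = Complex.exp ((((aa + bb)/2 : ℝ)) * Complex.I) := by
      rw [← Complex.exp_add]; congr 1; push_cast; ring
    have key : Complex.exp (-((((aa - bb)/2 : ℝ)) * Complex.I)) *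
          ((‖α‖ : ℂ) * Complex.exp ((aa : ℝ) * Complex.I)) +
          Complex.exp ((((aa - bb)/2 : ℝ)) * Complex.I) *
          ((‖β‖ : ℂ) * Complex.exp ((bb : ℝ) * Complex.I))
        = ((‖α‖ + ‖β‖ : ℝ) : ℂ) * Complex.exp ((((aa + bb)/2 : ℝ)) * Complex.I) := by
      push_cast at e1 e2 ⊢
      linear_combination (‖α‖ : ℂ) * e1 + (‖β‖ : ℂ) * e2
    rw [key, norm_mul, Complex.norm_real, Real.norm_eq_abs,
      abs_of_nonneg (by positivity)]
    simp [Complex.norm_exp]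

lemma opnorm_le_of_inner (C : H →L[ℂ] H) (K : ℝ) (hK : 0 ≤ K)
    (h : ∀ u v : H, ‖u‖ = 1 → ‖v‖ = 1 → ‖(inner ℂ (C v) u : ℂ)‖ ≤ K) : ‖C‖ ≤ K := by
  refine C.opNorm_le_bound hK fun v => ?_
  rcases eq_or_ne v 0 with rfl | hv
  · simp
  · set v' : H := ((‖v‖⁻¹ : ℝ) : ℂ) • v with hv'
    have hnv' : ‖v'‖ = 1 := by
      rw [hv', norm_smul, Complex.norm_real, Real.norm_eq_abs, abs_of_nonneg (by positivity),
        inv_mul_cancel₀ (norm_ne_zero_iff.mpr hv)]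
    have hCv' : ‖C v'‖ ≤ K := by
      rcases eq_or_ne (C v') 0 with h0 | h0
      · simp [h0, hK]
      · have hr : ‖C v'‖ ≠ 0 := norm_ne_zero_iff.mpr h0
        set u : H := ((‖C v'‖⁻¹ : ℝ) : ℂ) • C v' with hu
        have hnu : ‖u‖ = 1 := by
          rw [hu, norm_smul, Complex.norm_real, Real.norm_eq_abs,
            abs_of_nonneg (by positivity), inv_mul_cancel₀ hr]
        have hval : ‖(inner ℂ (C v') u : ℂ)‖ = ‖C v'‖ := by
          rw [hu, inner_smul_right, inner_self_eq_norm_sq_to_K]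
          simp only [norm_mul, norm_pow, RCLike.norm_ofReal, Complex.norm_real,
            Real.norm_eq_abs]
          rw [abs_of_nonneg (by positivity : (0:ℝ) ≤ ‖C v'‖⁻¹),
            abs_of_nonneg (norm_nonneg (C v')), sq, ← mul_assoc, inv_mul_cancel₀ hr, one_mul]
        have hb := h u v' hnu hnv'
        rwa [hval] at hb
    have hvv : v = ((‖v‖ : ℝ) : ℂ) • v' := by
      rw [hv', smul_smul, ← Complex.ofReal_mul, mul_inv_cancel₀ (norm_ne_zero_iff.mpr hv)]
      simp
    calc ‖C v‖ = ‖v‖ * ‖C v'‖ := by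
          nth_rewrite 1 [hvv]
          rw [map_smul, norm_smul, Complex.norm_real, Real.norm_eq_abs,
            abs_of_nonneg (norm_nonneg v)]
      _ ≤ K * ‖v‖ := by rw [mul_comm]; gcongr

lemma alg_id (A B : H →L[ℂ] H) :
    (A + adjoint B) + adjoint (A - adjoint B)
      = (2 : ℂ) • adjoint (reOp A + Complex.I • imOp B) := by
  simp only [reOp, imOp, map_add, map_sub, map_smul, map_smulₛₗ, adjoint_adjoint,
    smul_sub, smul_add, smul_smul, starRingEnd_apply, star_smul]
  ext x
  simp only [ContinuousLinearMap.add_apply, ContinuousLinearMap.sub_apply,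
    ContinuousLinearMap.smul_apply]
  have hsc : Complex.I * (1 / (2 * Complex.I)) = (1/2 : ℂ) := by
    have := Complex.I_ne_zero
    field_simp
  rw [hsc]
  have hst : star (1/2 : ℂ) = 1/2 := by
    simp [star_div₀]
  rw [hst]
  norm_num
  module

theorem numRad_blockOffDiag_eq_necessary (A B : H →L[ℂ] H)
    (h : numRad (blockOffDiag A B) = (1 / 2) * ‖reOp A + Complex.I • imOp B‖) :
    ‖A + ContinuousLinearMap.adjoint B‖ = ‖A - ContinuousLinearMap.adjoint B‖
      ∧ ‖A + ContinuousLinearMap.adjoint B‖ = ‖reOp A + Complex.I • imOp B‖ := by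
  set W := 2 * numRad (blockOffDiag A B) with hW
  have hW0 : 0 ≤ W := by
    have := numRad_nonneg (blockOffDiag A B)
    rw [hW]; linarith
  -- upper bounds
  have hbnd : ∀ u v : H, ‖u‖ = 1 → ‖v‖ = 1 →
      ‖(inner ℂ (A v) u : ℂ)‖ + ‖(inner ℂ (B u) v : ℂ)‖ ≤ W := by
    intro u v hu hv
    obtain ⟨c, hc, hce⟩ := align (inner ℂ (A v) u) (inner ℂ (B u) v)
    rw [← hce]
    exact key_ineq A B u v hu hv c hc
  have hplus : ‖A + adjoint B‖ ≤ W := by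
    refine opnorm_le_of_inner _ W hW0 fun u v hu hv => ?_
    have : (inner ℂ ((A + adjoint B) v) u : ℂ)
        = inner ℂ (A v) u + (starRingEnd ℂ) (inner ℂ (B u) v) := by
      rw [ContinuousLinearMap.add_apply, inner_add_left, adjoint_inner_left, inner_conj_symm]
    rw [this]
    calc ‖(inner ℂ (A v) u : ℂ) + (starRingEnd ℂ) (inner ℂ (B u) v)‖
        ≤ ‖(inner ℂ (A v) u : ℂ)‖ + ‖(starRingEnd ℂ) ((inner ℂ (B u) v : ℂ))‖ := norm_add_le _ _
      _ = ‖(inner ℂ (A v) u : ℂ)‖ + ‖(inner ℂ (B u) v : ℂ)‖ := by rw [RCLike.norm_conj]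
      _ ≤ W := hbnd u v hu hv
  have hminus : ‖A - adjoint B‖ ≤ W := by
    refine opnorm_le_of_inner _ W hW0 fun u v hu hv => ?_
    have : (inner ℂ ((A - adjoint B) v) u : ℂ)
        = inner ℂ (A v) u - (starRingEnd ℂ) (inner ℂ (B u) v) := by
      rw [ContinuousLinearMap.sub_apply, inner_sub_left, adjoint_inner_left, inner_conj_symm]
    rw [this]
    calc ‖(inner ℂ (A v) u : ℂ) - (starRingEnd ℂ) (inner ℂ (B u) v)‖
        ≤ ‖(inner ℂ (A v) u : ℂ)‖ + ‖(starRingEnd ℂ) ((inner ℂ (B u) v : ℂ))‖ := norm_sub_le _ _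
      _ = ‖(inner ℂ (A v) u : ℂ)‖ + ‖(inner ℂ (B u) v : ℂ)‖ := by rw [RCLike.norm_conj]
      _ ≤ W := hbnd u v hu hv
  -- lower bound
  have hlow : 2 * ‖reOp A + Complex.I • imOp B‖ ≤ ‖A + adjoint B‖ + ‖A - adjoint B‖ := by
    have h1 : ‖(A + adjoint B) + adjoint (A - adjoint B)‖
        = 2 * ‖reOp A + Complex.I • imOp B‖ := by
      rw [alg_id, norm_smul, Complex.norm_ofNat,
        LinearIsometryEquiv.norm_map ContinuousLinearMap.adjoint]
    calc 2 * ‖reOp A + Complex.I • imOp B‖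
        = ‖(A + adjoint B) + adjoint (A - adjoint B)‖ := h1.symm
      _ ≤ ‖A + adjoint B‖ + ‖adjoint (A - adjoint B)‖ := norm_add_le _ _
      _ = ‖A + adjoint B‖ + ‖A - adjoint B‖ := by
          rw [LinearIsometryEquiv.norm_map ContinuousLinearMap.adjoint]
  have hWN : W = ‖reOp A + Complex.I • imOp B‖ := by rw [hW, h]; ring
  rw [hWN] at hplus hminus
  constructor <;> linarith
end
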